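/- Let k ≥ 0 be an integer, let b_1,…,b_k be real numbers, and let h(x) = x(x−1)·∏_{j=1}^k (x − 1/2 − i·b_j), where i is the imaginary unit. Then every complex zero of the polynomial h(x) + h(x+1) has real part 0. -/

import Mathlib

open Polynomial
open scoped Classical

/-- The cycle type of a permutation of `Fin n` as a partition of `n`,
including fixed points as parts equal to `1`. -/
noncomputable def fullCycleType {n : ℕ} (σ : Equiv.Perm (Fin n)) : Multiset ℕ :=
  σ.cycleType + Multiset.replicate (n - σ.cycleType.sum) 1

/-- The number of disjoint cycles of a permutation, fixed points included. -/
noncomputable def numCycles {n : ℕ} (σ : Equiv.Perm (Fin n)) : ℕ :=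
  Multiset.card (fullCycleType σ)

/-- The set (conjugacy class) of permutations of `Fin n` with full cycle type `β`. -/
noncomputable def permClass (n : ℕ) (β : Multiset ℕ) : Finset (Equiv.Perm (Fin n)) :=
  Finset.univ.filter (fun ω => fullCycleType ω = β)

/-- The polynomial `P_{[2,n-2],β}(x) = (n(n-1)/|C_β|) ⬝ Σ_{ρ(ω)=β} x^{κ(αω)}`. -/
noncomputable def Pperm {n : ℕ} (α : Equiv.Perm (Fin n)) (β : Multiset ℕ) : Polynomial ℚ :=
  Polynomial.C (((n : ℚ) * ((n : ℚ) - 1)) / ((permClass n β).card : ℚ)) *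
    ∑ ω ∈ permClass n β, Polynomial.X ^ (numCycles (α * ω))

/-- The polynomial `binom(x + c, k)` in `x`: for `k ≥ 0` it is
`(x+c)(x+c-1)⋯(x+c-k+1)/k!`, and it is `0` for `k < 0`. -/
noncomputable def binomPoly (c k : ℤ) : Polynomial ℚ :=
  if 0 ≤ k then
    (((k.toNat).factorial : ℚ))⁻¹ •
      ((descPochhammer ℚ k.toNat).comp (Polynomial.X + Polynomial.C (c : ℚ)))
  else 0

/-- The signless Stirling number of the first kind: the number of permutations of
an `N`-element set with exactly `m` cycles (fixed points included). -/
noncomputable def stirling1 (N m : ℕ) : ℕ :=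
  (Finset.univ.filter (fun σ : Equiv.Perm (Fin N) => numCycles σ = m)).card

/-- For a Young diagram with row lengths `L` (rows and columns 0-indexed),
the product `∏_{u} (t + c(u))` over the cells `u`, `c(u)` being the content. -/
def contentProd (L : List ℕ) (t : ℤ) : ℤ :=
  ∏ i ∈ Finset.range L.length, ∏ j ∈ Finset.range (L.getD i 0), (t + (j : ℤ) - (i : ℤ))

/-- `C(a, b)` for an integer `b`: the usual binomial coefficient when `b ≥ 0`
(which is `0` for `b > a`), and `0` when `b < 0`. -/
def chooseZ (a : ℕ) (b : ℤ) : ℚ := if 0 ≤ b then (a.choose b.toNat : ℚ) else 0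


noncomputable def Complex.abs : AbsoluteValue ℂ ℝ := NormedField.toAbsoluteValue ℂ

lemma Complex.abs_apply (z : ℂ) : Complex.abs z = Real.sqrt (Complex.normSq z) :=
  Complex.norm_def z

lemma abs_lt_of_re_pos (w : ℂ) (t : ℝ) (ht : 0 < t) (hw : 0 < w.re) :
    Complex.abs (w - (t : ℂ)) < Complex.abs (w + (t : ℂ)) := by
  rw [Complex.abs_apply, Complex.abs_apply]
  apply Real.sqrt_lt_sqrt (Complex.normSq_nonneg _)
  simp only [Complex.normSq_apply, Complex.sub_re, Complex.add_re, Complex.ofReal_re,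
    Complex.sub_im, Complex.add_im, Complex.ofReal_im, sub_zero, add_zero]
  nlinarith

lemma abs_lt_of_re_neg (w : ℂ) (t : ℝ) (ht : 0 < t) (hw : w.re < 0) :
    Complex.abs (w + (t : ℂ)) < Complex.abs (w - (t : ℂ)) := by
  rw [Complex.abs_apply, Complex.abs_apply]
  apply Real.sqrt_lt_sqrt (Complex.normSq_nonneg _)
  simp only [Complex.normSq_apply, Complex.sub_re, Complex.add_re, Complex.ofReal_re,
    Complex.sub_im, Complex.add_im, Complex.ofReal_im, sub_zero, add_zero]
  nlinarith

/-- if `h(x) = x(x−1)∏_j (x − 1/2 − i b_j)` with `b_j` real, then every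
zero of `h(x) + h(x+1)` is purely imaginary. -/
theorem sum_shift_imaginary_zeros (k : ℕ) (b : Fin k → ℝ) (h : Polynomial ℂ)
    (hh : h = Polynomial.X * (Polynomial.X - 1) *
      ∏ j : Fin k, (Polynomial.X - Polynomial.C ((1 / 2 : ℂ) + (b j : ℂ) * Complex.I))) :
    ∀ z : ℂ, (h + h.comp (Polynomial.X + 1)).eval z = 0 → z.re = 0 := by
  intro z hz
  by_contra hre
  have hzne : z ≠ 0 := fun h0 => hre (by simp [h0])
  subst hh
  set P : ℂ := ∏ j : Fin k, (z - (1 / 2 + (b j : ℂ) * Complex.I)) with hP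
  set Q : ℂ := ∏ j : Fin k, (z + (1 / 2 - (b j : ℂ) * Complex.I)) with hQ
  have hprod : (∏ j : Fin k, (z + 1 - (1 / 2 + (b j : ℂ) * Complex.I))) = Q := by
    rw [hQ]; exact Finset.prod_congr rfl (fun j _ => by ring)
  have key : (z - 1) * P + (z + 1) * Q = 0 := by
    simp only [eval_add, eval_comp, eval_mul, eval_prod, eval_sub, eval_X, eval_one,
      eval_C] at hz
    rw [hprod] at hz
    have : z * ((z - 1) * P + (z + 1) * Q) = 0 := by rw [← hz, hP]; ring
    rcases mul_eq_zero.mp this with h0 | h0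
    · exact absurd h0 hzne
    · exact h0
  have heq : (z - 1) * P = -((z + 1) * Q) := eq_neg_of_add_eq_zero_left key
  have habs : Complex.abs (z - 1) * ∏ j : Fin k, Complex.abs (z - (1 / 2 + (b j : ℂ) * Complex.I))
      = Complex.abs (z + 1) * ∏ j : Fin k, Complex.abs (z + (1 / 2 - (b j : ℂ) * Complex.I)) := by
    have := congrArg Complex.abs heq
    rwa [map_neg_eq_map, map_mul, map_mul, hP, hQ, map_prod, map_prod] at this
  have half : (0 : ℝ) < 1 / 2 := by norm_num
  rcases lt_or_gt_of_ne hre with hneg | hpos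
  · -- Re z < 0
    have hAB : Complex.abs (z + 1) < Complex.abs (z - 1) := by
      have := abs_lt_of_re_neg z 1 one_pos hneg
      simpa using this
    have hjf : ∀ j : Fin k, Complex.abs (z + (1 / 2 - (b j : ℂ) * Complex.I))
        < Complex.abs (z - (1 / 2 + (b j : ℂ) * Complex.I)) := by
      intro j
      have hw : ((z - (b j : ℂ) * Complex.I)).re < 0 := by
        simpa [Complex.sub_re, Complex.mul_re] using hneg
      have := abs_lt_of_re_neg (z - (b j : ℂ) * Complex.I) (1 / 2) half hw
      have e1 : z - (b j : ℂ) * Complex.I + ((1 / 2 : ℝ) : ℂ)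
          = z + (1 / 2 - (b j : ℂ) * Complex.I) := by push_cast; ring
      have e2 : z - (b j : ℂ) * Complex.I - ((1 / 2 : ℝ) : ℂ)
          = z - (1 / 2 + (b j : ℂ) * Complex.I) := by push_cast; ring
      rwa [e1, e2] at this
    have hQpos : (0 : ℝ) < ∏ j : Fin k, Complex.abs (z - (1 / 2 + (b j : ℂ) * Complex.I)) :=
      Finset.prod_pos fun j _ => lt_of_le_of_lt (AbsoluteValue.nonneg _ _) (hjf j)
    have hPQ : (∏ j : Fin k, Complex.abs (z + (1 / 2 - (b j : ℂ) * Complex.I)))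
        ≤ ∏ j : Fin k, Complex.abs (z - (1 / 2 + (b j : ℂ) * Complex.I)) :=
      Finset.prod_le_prod (fun j _ => AbsoluteValue.nonneg _ _) (fun j _ => (hjf j).le)
    have : Complex.abs (z + 1) * ∏ j : Fin k, Complex.abs (z + (1 / 2 - (b j : ℂ) * Complex.I))
        < Complex.abs (z - 1) * ∏ j : Fin k, Complex.abs (z - (1 / 2 + (b j : ℂ) * Complex.I)) :=
      calc Complex.abs (z + 1) * ∏ j : Fin k, Complex.abs (z + (1 / 2 - (b j : ℂ) * Complex.I))
          ≤ Complex.abs (z + 1) * ∏ j : Fin k, Complex.abs (z - (1 / 2 + (b j : ℂ) * Complex.I)) :=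
            mul_le_mul_of_nonneg_left hPQ (AbsoluteValue.nonneg _ _)
        _ < _ := mul_lt_mul_of_pos_right hAB hQpos
    linarith [habs, this]
  · -- Re z > 0
    have hAB : Complex.abs (z - 1) < Complex.abs (z + 1) := by
      have := abs_lt_of_re_pos z 1 one_pos hpos
      simpa using this
    have hjf : ∀ j : Fin k, Complex.abs (z - (1 / 2 + (b j : ℂ) * Complex.I))
        < Complex.abs (z + (1 / 2 - (b j : ℂ) * Complex.I)) := by
      intro j
      have hw : (0 : ℝ) < ((z - (b j : ℂ) * Complex.I)).re := by
        simpa [Complex.sub_re, Complex.mul_re] using hpos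
      have := abs_lt_of_re_pos (z - (b j : ℂ) * Complex.I) (1 / 2) half hw
      have e1 : z - (b j : ℂ) * Complex.I + ((1 / 2 : ℝ) : ℂ)
          = z + (1 / 2 - (b j : ℂ) * Complex.I) := by push_cast; ring
      have e2 : z - (b j : ℂ) * Complex.I - ((1 / 2 : ℝ) : ℂ)
          = z - (1 / 2 + (b j : ℂ) * Complex.I) := by push_cast; ring
      rwa [e1, e2] at this
    have hQpos : (0 : ℝ) < ∏ j : Fin k, Complex.abs (z + (1 / 2 - (b j : ℂ) * Complex.I)) :=
      Finset.prod_pos fun j _ => lt_of_le_of_lt (AbsoluteValue.nonneg _ _) (hjf j)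
    have hPQ : (∏ j : Fin k, Complex.abs (z - (1 / 2 + (b j : ℂ) * Complex.I)))
        ≤ ∏ j : Fin k, Complex.abs (z + (1 / 2 - (b j : ℂ) * Complex.I)) :=
      Finset.prod_le_prod (fun j _ => AbsoluteValue.nonneg _ _) (fun j _ => (hjf j).le)
    have : Complex.abs (z - 1) * ∏ j : Fin k, Complex.abs (z - (1 / 2 + (b j : ℂ) * Complex.I))
        < Complex.abs (z + 1) * ∏ j : Fin k, Complex.abs (z + (1 / 2 - (b j : ℂ) * Complex.I)) :=
      calc Complex.abs (z - 1) * ∏ j : Fin k, Complex.abs (z - (1 / 2 + (b j : ℂ) * Complex.I))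
          ≤ Complex.abs (z - 1) * ∏ j : Fin k, Complex.abs (z + (1 / 2 - (b j : ℂ) * Complex.I)) :=
            mul_le_mul_of_nonneg_left hPQ (AbsoluteValue.nonneg _ _)
        _ < _ := mul_lt_mul_of_pos_right hAB hQpos
    linarith [habs, this]
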